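/- Under the value-permuting action of Γ ≤ Sym(R)≀Sym(U), let S ∈ Ω_{j−1} be normalized and let X, Y ∈ e(S) with underline(X) = U_{j−1} ∪ {p} and underline(Y) = U_{j−1} ∪ {q}. Then X and Y lie in the same Aut(S)-orbit of partial assignments if and only if the pairs (p, X(p)) and (q, Y(q)) lie in the same Aut(S)-orbit of U × R under the action (u,r)^{(π,σ)} = (u^π, r^{σ(u^π)}). -/

import Mathlib

/-!
The wreath product `Sym(R) ≀ Sym(U)` is modeled as the type `Wr U R` of pairs
`(perm, vals)` with `perm ∈ Sym(U)` and `vals : U → Sym(R)`, equipped with the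
group structure mirroring (as a left action) the paper's right-action
conventions: `(π₁,σ₁)(π₂,σ₂) = (π₁π₂, v ↦ σ₁(v) σ₂(π₁⁻¹ v))`, acting on points
by `u ↦ π u`, on pairs by `(u,r) ↦ (π u, σ(π u) r)`, and on partial
assignments (modeled as `U → Option R`) by `(g • X)(v) = σ(v)(X(π⁻¹ v))`.
-/

namespace ValueSymmetry

/-- An element of the wreath product `Sym(R) ≀ Sym(U)`. -/
@[ext]
structure Wr (U R : Type*) where
  perm : Equiv.Perm U
  vals : U → Equiv.Perm R

namespace Wr

variable {U R : Type*}

instance : Mul (Wr U R) :=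
  ⟨fun g h => ⟨g.perm * h.perm, fun v => g.vals v * h.vals (g.perm⁻¹ v)⟩⟩

instance : One (Wr U R) := ⟨⟨1, fun _ => 1⟩⟩

instance : Inv (Wr U R) := ⟨fun g => ⟨g.perm⁻¹, fun v => (g.vals (g.perm v))⁻¹⟩⟩

@[simp] lemma mul_perm (g h : Wr U R) : (g * h).perm = g.perm * h.perm := rfl
@[simp] lemma mul_vals (g h : Wr U R) (v : U) :
    (g * h).vals v = g.vals v * h.vals (g.perm⁻¹ v) := rfl
@[simp] lemma one_perm : (1 : Wr U R).perm = 1 := rfl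
@[simp] lemma one_vals (v : U) : (1 : Wr U R).vals v = 1 := rfl
@[simp] lemma inv_perm (g : Wr U R) : (g⁻¹).perm = g.perm⁻¹ := rfl
@[simp] lemma inv_vals (g : Wr U R) (v : U) :
    (g⁻¹).vals v = (g.vals (g.perm v))⁻¹ := rfl

instance : Group (Wr U R) where
  mul_assoc a b c := by
    ext
    · simp [mul_assoc]
    · simp [mul_assoc]
  one_mul a := by
    ext <;> simp
  mul_one a := by
    ext <;> simp
  inv_mul_cancel a := by
    ext <;> simp

end Wr

variable {U R : Type*}

/-- The action of a wreath-product element on a point of `U`. -/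
def wpt (g : Wr U R) (p : U) : U := g.perm p

/-- The action of a wreath-product element on a pair `(u, r) ∈ U × R`
(left-action form of the paper's `(u,r)^{(π,σ)} = (u^π, r^{σ(u^π)})`). -/
def wpair (g : Wr U R) (pr : U × R) : U × R :=
  (g.perm pr.1, g.vals (g.perm pr.1) pr.2)

/-- The domain `underline X` of a partial assignment. -/
def dom (X : U → Option R) : Set U := {u | X u ≠ none}

/-- The value-permuting action of a wreath-product element on a partial
assignment (left-action form of the paper's `X^{(π,σ)}(u) = X(u^{π⁻¹})^{σ(u)}`). -/
def wsmul (g : Wr U R) (X : U → Option R) : U → Option R :=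
  fun v => (X (g.perm⁻¹ v)).map (g.vals v)

open scoped Classical in
/-- Restriction of a partial assignment to a set `W` of variables. -/
noncomputable def restrict (X : U → Option R) (W : Set U) : U → Option R :=
  fun u => if u ∈ W then X u else none

/-- `Uset u j = U_j = {u_1, …, u_j}` (`u` is 0-indexed). -/
def Uset {k : ℕ} (u : Fin k → U) (j : ℕ) : Set U :=
  {x | ∃ i : Fin k, (i : ℕ) < j ∧ u i = x}

/-- `Ω_j`: partial assignments whose domain lies in the `Γ`-orbit of `U_j`. -/
def OmegaJ (Γ : Subgroup (Wr U R)) {k : ℕ} (u : Fin k → U) (j : ℕ)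
    (X : U → Option R) : Prop :=
  ∃ g ∈ Γ, ⇑g.perm '' dom X = Uset u j

/-- The extension relation `e ⊆ Ω_j × Ω_{j-1}` for the value-permuting action. -/
def erel (Γ : Subgroup (Wr U R)) {k : ℕ} (u : Fin k → U) (j : ℕ)
    (X S : U → Option R) : Prop :=
  ∃ g ∈ Γ, ⇑g.perm '' dom X = Uset u j ∧ ⇑g.perm '' dom S = Uset u (j - 1) ∧
    restrict (wsmul g X) (Uset u (j - 1)) = wsmul g S

/-- The setwise stabilizer `Aut(W)` of `W ⊆ U` in `Γ`. -/
def AutSet (Γ : Subgroup (Wr U R)) (W : Set U) : Set (Wr U R) :=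
  {g | g ∈ Γ ∧ ⇑g.perm '' W = W}

/-- The automorphism group (stabilizer) `Aut(S)` of a partial assignment `S` in `Γ`. -/
def AutAsg (Γ : Subgroup (Wr U R)) (S : U → Option R) : Set (Wr U R) :=
  {g | g ∈ Γ ∧ wsmul g S = S}

/-- The orbit of a point `p ∈ U` under a set `A` of wreath-product elements. -/
def ptOrbit (A : Set (Wr U R)) (p : U) : Set U :=
  {q | ∃ g ∈ A, g.perm p = q}


section Helpers

lemma dom_wsmul (g : Wr U R) (X : U → Option R) :
    dom (wsmul g X) = ⇑g.perm '' dom X := by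
  ext v
  simp only [dom, wsmul, Set.mem_setOf_eq, Set.mem_image, ne_eq, Option.map_eq_none_iff]
  constructor
  · intro h
    exact ⟨g.perm⁻¹ v, h, by simp⟩
  · rintro ⟨w, hw, rfl⟩
    simpa using hw

lemma perm_mem_iff {f : Equiv.Perm U} {A : Set U} (h : ⇑f '' A = A) (x : U) :
    f x ∈ A ↔ x ∈ A := by
  constructor
  · intro hx
    rw [← h] at hx
    obtain ⟨y, hy, hxy⟩ := hx
    rwa [← f.injective hxy]
  · intro hx
    rw [← h]
    exact ⟨x, hx, rfl⟩

lemma perm_inv_mem_iff {f : Equiv.Perm U} {A : Set U} (h : ⇑f '' A = A) (x : U) :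
    f⁻¹ x ∈ A ↔ x ∈ A := by
  conv_rhs => rw [← f.apply_symm_apply x]
  exact (perm_mem_iff h (f⁻¹ x)).symm

lemma ncard_Uset {k : ℕ} {u : Fin k → U} (hu : Function.Injective u) {m : ℕ} (hm : m ≤ k) :
    (Uset u m).ncard = m := by
  have hset : Uset u m = Set.range (fun i : Fin m => u (Fin.castLE hm i)) := by
    ext x
    simp only [Uset, Set.mem_setOf_eq, Set.mem_range]
    constructor
    · rintro ⟨i, hi, rfl⟩
      exact ⟨⟨(i : ℕ), hi⟩, rfl⟩
    · rintro ⟨i, rfl⟩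
      exact ⟨Fin.castLE hm i, i.isLt, rfl⟩
  have hinj : Function.Injective (fun i : Fin m => u (Fin.castLE hm i)) :=
    fun a b hab => Fin.castLE_injective hm (hu hab)
  rw [hset, ← Nat.card_coe_set_eq, Nat.card_range_of_injective hinj,
    Nat.card_eq_fintype_card, Fintype.card_fin]

lemma agree_of_erel (Γ : Subgroup (Wr U R)) {k : ℕ} {u : Fin k → U} {j : ℕ}
    {X S : U → Option R} (hSnorm : dom S = Uset u (j - 1))
    (he : erel Γ u j X S) : ∀ w ∈ Uset u (j - 1), X w = S w := by
  obtain ⟨γ, hγ, h1, h2, h3⟩ := he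
  rw [hSnorm] at h2
  intro w hw
  have hv : γ.perm w ∈ Uset u (j - 1) := (perm_mem_iff h2 w).mpr hw
  have h4 := congrFun h3 (γ.perm w)
  simp only [restrict, if_pos hv, wsmul, Equiv.Perm.coe_inv, Equiv.symm_apply_apply] at h4
  exact Option.map_injective (γ.vals (γ.perm w)).injective h4

lemma not_mem_Uset_of {Γ : Subgroup (Wr U R)} {k : ℕ} {u : Fin k → U}
    (hu : Function.Injective u) {j : ℕ} (hj1 : 1 ≤ j) (hjk : j ≤ k)
    {X : U → Option R} {p : U} (hX : OmegaJ Γ u j X)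
    (hdX : dom X = Uset u (j - 1) ∪ {p}) : p ∉ Uset u (j - 1) := by
  intro hp
  have hdX' : dom X = Uset u (j - 1) := by
    rw [hdX, Set.union_eq_self_of_subset_right (by simpa using hp)]
  obtain ⟨g, hg, himg⟩ := hX
  have h1 : (⇑g.perm '' dom X).ncard = (dom X).ncard :=
    Set.ncard_image_of_injective _ g.perm.injective
  rw [himg, hdX', ncard_Uset hu hjk, ncard_Uset hu (le_trans (Nat.sub_le _ _) hjk)] at h1
  omega

end Helpers


/-- Under the value-permuting action, for a normalized seed `S` and extensions
`X, Y ∈ e(S)` with `underline X = U_{j-1} ∪ {p}`, `underline Y = U_{j-1} ∪ {q}`,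
`X(p) = r`, `Y(q) = s`:  `X` and `Y` lie in the same `Aut(S)`-orbit of partial
assignments iff `(p, r)` and `(q, s)` lie in the same `Aut(S)`-orbit of
`U × R` under the action `(u,r) ↦ (π u, σ(π u) r)`. -/
theorem stmt_19 {U R : Type*} [Finite U] [Finite R]
    (Γ : Subgroup (Wr U R)) {k : ℕ} (u : Fin k → U)
    (hu : Function.Injective u)
    (j : ℕ) (hj1 : 1 ≤ j) (hjk : j ≤ k)
    (S X Y : U → Option R)
    (hS : OmegaJ Γ u (j - 1) S)
    (hSnorm : dom S = Uset u (j - 1))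
    (p q : U)
    (hX : OmegaJ Γ u j X ∧ erel Γ u j X S)
    (hY : OmegaJ Γ u j Y ∧ erel Γ u j Y S)
    (hdX : dom X = Uset u (j - 1) ∪ {p})
    (hdY : dom Y = Uset u (j - 1) ∪ {q})
    (r s : R) (hr : X p = some r) (hs : Y q = some s) :
    (∃ g ∈ AutAsg Γ S, wsmul g X = Y) ↔
      (∃ g ∈ AutAsg Γ S, wpair g (p, r) = (q, s)) := by
  set U' := Uset u (j - 1) with hU'
  have hp : p ∉ U' := not_mem_Uset_of hu hj1 hjk hX.1 hdX
  have hq : q ∉ U' := not_mem_Uset_of hu hj1 hjk hY.1 hdY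
  have hXS : ∀ w ∈ U', X w = S w := agree_of_erel Γ hSnorm hX.2
  have hYS : ∀ w ∈ U', Y w = S w := agree_of_erel Γ hSnorm hY.2
  constructor
  · rintro ⟨g, ⟨hgΓ, hgS⟩, hgX⟩
    have himg : ⇑g.perm '' U' = U' := by
      have := dom_wsmul g S
      rw [hgS, hSnorm] at this
      exact this.symm
    have hdom : U' ∪ {g.perm p} = U' ∪ {q} := by
      have h1 : dom (wsmul g X) = ⇑g.perm '' dom X := dom_wsmul g X
      rw [hgX, hdY, hdX, Set.image_union, himg, Set.image_singleton] at h1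
      exact h1.symm
    have hgp : g.perm p = q := by
      have : g.perm p ∈ U' ∪ {q} := by rw [← hdom]; simp
      rcases this with h | h
      · exact absurd ((perm_mem_iff himg p).mp h) hp
      · simpa using h
    refine ⟨g, ⟨hgΓ, hgS⟩, ?_⟩
    have hval : Y q = some (g.vals q r) := by
      rw [← hgX]
      simp only [wsmul, ← hgp, Equiv.Perm.coe_inv, Equiv.symm_apply_apply, hr, Option.map_some]
    rw [hs] at hval
    simp only [wpair, hgp]
    exact Prod.ext rfl (Option.some_injective R hval.symm)
  · rintro ⟨g, ⟨hgΓ, hgS⟩, hpair⟩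
    have hgp : g.perm p = q := congrArg Prod.fst hpair
    have hgv : g.vals q r = s := by
      have := congrArg Prod.snd hpair
      simpa [wpair, hgp] using this
    have himg : ⇑g.perm '' U' = U' := by
      have := dom_wsmul g S
      rw [hgS, hSnorm] at this
      exact this.symm
    refine ⟨g, ⟨hgΓ, hgS⟩, ?_⟩
    funext v
    by_cases hv : v ∈ U'
    · have hinv : g.perm⁻¹ v ∈ U' := (perm_inv_mem_iff himg v).mpr hv
      have : wsmul g X v = wsmul g S v := by
        simp only [wsmul, hXS _ hinv]
      rw [this, congrFun hgS v, hYS _ hv]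
    · by_cases hvq : v = q
      · subst hvq
        have hinv : g.perm⁻¹ v = p := by
          rw [← hgp, Equiv.Perm.coe_inv, Equiv.symm_apply_apply]
        simp only [wsmul, hinv, hr, Option.map_some, hgv, hs]
      · have hXnone : X (g.perm⁻¹ v) = none := by
          by_contra hne
          have : g.perm⁻¹ v ∈ dom X := hne
          rw [hdX] at this
          rcases this with h | h
          · exact hv ((perm_inv_mem_iff himg v).mp h)
          · apply hvq
            rw [← hgp, ← Set.mem_singleton_iff.mp h, Equiv.Perm.coe_inv, Equiv.apply_symm_apply]
        have hYnone : Y v = none := by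
          by_contra hne
          have : v ∈ dom Y := hne
          rw [hdY] at this
          rcases this with h | h
          · exact hv h
          · exact hvq (Set.mem_singleton_iff.mp h)
        simp only [wsmul, hXnone, Option.map_none, hYnone]


end ValueSymmetry
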